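/- The number of unipotent elements of GL(n,p) is p^{n(n-1)}. -/

import Mathlib

open Matrix


open Finset

/-- `Gr q a b = ∏_{j ∈ [a,b)} q^j (q^{j+1} - 1)`, the ratio `|GL_b|/|GL_a|`. -/
def Gr (q a b : ℕ) : ℕ := ∏ j ∈ Finset.Ico a b, (q ^ j * (q ^ (j + 1) - 1))

lemma Gr_self (q a : ℕ) : Gr q a a = 1 := by simp [Gr]

lemma Gr_split (q : ℕ) {a b c : ℕ} (h1 : a ≤ b) (h2 : b ≤ c) :
    Gr q a c = Gr q a b * Gr q b c := (Finset.prod_Ico_consecutive _ h1 h2).symm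

/-- `GG q m = |GL_m(F_q)|`. -/
def GG (q m : ℕ) : ℕ := ∏ i ∈ Finset.range m, (q ^ m - q ^ i)

lemma GG_pos {q : ℕ} (hq : 2 ≤ q) (m : ℕ) : 0 < GG q m := by
  refine Finset.prod_pos fun i hi => ?_
  have : q ^ i < q ^ m := Nat.pow_lt_pow_right (by omega) (Finset.mem_range.1 hi)
  omega

lemma GG_eq_Gr {q : ℕ} (hq : 1 ≤ q) (m : ℕ) : GG q m = Gr q 0 m := by
  unfold GG Gr
  rw [← Finset.range_eq_Ico]
  calc ∏ i ∈ range m, (q ^ m - q ^ i)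
      = ∏ i ∈ range m, (q ^ i * (q ^ (m - i) - 1)) := by
        refine Finset.prod_congr rfl fun i hi => ?_
        have him : i ≤ m := le_of_lt (Finset.mem_range.1 hi)
        rw [Nat.mul_sub, mul_one, ← pow_add]
        have : i + (m - i) = m := by omega
        rw [this]
    _ = (∏ i ∈ range m, q ^ i) * ∏ i ∈ range m, (q ^ (m - i) - 1) := by
        rw [Finset.prod_mul_distrib]
    _ = (∏ i ∈ range m, q ^ i) * ∏ i ∈ range m, (q ^ (i + 1) - 1) := by
        congr 1
        rw [← Finset.prod_range_reflect (fun j => q ^ (j + 1) - 1) m]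
        refine Finset.prod_congr rfl fun i hi => ?_
        have := Finset.mem_range.1 hi
        congr 2
        omega
    _ = ∏ j ∈ range m, (q ^ j * (q ^ (j + 1) - 1)) := by rw [Finset.prod_mul_distrib]

lemma key_identity {q : ℕ} (hq : 1 ≤ q) (d : ℕ) :
    ∑ k ∈ Finset.range (d + 1), Gr q k d * q ^ (k * k - k) = q ^ (d * d) := by
  induction d with
  | zero => simp [Gr]
  | succ d ih =>
    rw [Finset.sum_range_succ]
    have h1 : ∀ k ∈ Finset.range (d + 1),
        Gr q k (d + 1) * q ^ (k * k - k)
          = (q ^ d * (q ^ (d + 1) - 1)) * (Gr q k d * q ^ (k * k - k)) := by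
      intro k hk
      have hk' : k ≤ d := by have := Finset.mem_range.1 hk; omega
      rw [Gr_split q hk' (Nat.le_succ d)]
      have : Gr q d (d + 1) = q ^ d * (q ^ (d + 1) - 1) := by
        simp [Gr]
      rw [this]; ring
    rw [Finset.sum_congr rfl h1, ← Finset.mul_sum, ih, Gr_self]
    have e1 : (d + 1) * (d + 1) - (d + 1) = d * d + d := by ring_nf; omega
    have e2 : q ^ d * (q ^ (d + 1) - 1) * q ^ (d * d) + 1 * q ^ (d * d + d)
        = q ^ (d * d + d) * (q ^ (d + 1) - 1) + q ^ (d * d + d) := by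
      rw [pow_add]; ring
    have e3 : q ^ (d * d + d) * (q ^ (d + 1) - 1) + q ^ (d * d + d)
        = q ^ ((d + 1) * (d + 1)) := by
      rw [← Nat.mul_succ, Nat.succ_eq_add_one,
        Nat.sub_add_cancel (Nat.one_le_pow _ _ (by omega)), ← pow_add]
      congr 1
      ring
    rw [e1, e2, e3]

/-- Counting a type by fibers of constant size. -/
lemma card_eq_fiber_mul {α β : Type*} [Finite α] [Finite β] (f : α → β) (c : ℕ)
    (hc : ∀ b : β, Nat.card {a : α // f a = b} = c) :
    Nat.card α = c * Nat.card β := by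
  classical
  have := Fintype.ofFinite α
  have := Fintype.ofFinite β
  rw [Nat.card_eq_fintype_card, Fintype.card_congr (Equiv.sigmaFiberEquiv f).symm,
    Fintype.card_sigma]
  have : ∀ b : β, Fintype.card {a : α // f a = b} = c := fun b => by
    rw [← Nat.card_eq_fintype_card]; exact hc b
  simp only [this, Finset.sum_const, Finset.card_univ, smul_eq_mul,
    Nat.card_eq_fintype_card, mul_comm]

lemma card_eq_sum_fibers {α β : Type*} [Finite α] [Fintype β] (f : α → β) :
    Nat.card α = ∑ b : β, Nat.card {a : α // f a = b} := by
  classical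
  have := Fintype.ofFinite α
  rw [Nat.card_eq_fintype_card, Fintype.card_congr (Equiv.sigmaFiberEquiv f).symm,
    Fintype.card_sigma]
  exact Finset.sum_congr rfl fun b _ => (Nat.card_eq_fintype_card).symm

open LinearMap Module

section Helpers

variable {F : Type*} [Field F]
variable {M M₂ : Type*} [AddCommGroup M] [Module F M] [AddCommGroup M₂] [Module F M₂]

lemma lconj_pow (e : M ≃ₗ[F] M₂) (f : Module.End F M) (m : ℕ) :
    e.conj (f ^ m) = (e.conj f) ^ m := by
  induction m with
  | zero => simp [pow_zero]; exact LinearEquiv.conj_id e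
  | succ m ih =>
    rw [pow_succ, pow_succ, ← ih]
    ext x
    simp [LinearEquiv.conj_apply_apply, Module.End.mul_apply]

lemma prodMap_pow (f : Module.End F M) (g : Module.End F M₂) (m : ℕ) :
    (f.prodMap g) ^ m = (f ^ m).prodMap (g ^ m) := by
  induction m with
  | zero => ext x <;> simp
  | succ m ih => rw [pow_succ, ih, pow_succ, pow_succ, prodMap_mul]

lemma ker_conj (e : M ≃ₗ[F] M₂) (f : Module.End F M) :
    LinearMap.ker (e.conj f) = Submodule.map (e : M →ₗ[F] M₂) (LinearMap.ker f) := by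
  ext x
  simp only [Submodule.mem_map, LinearMap.mem_ker, LinearEquiv.conj_apply_apply]
  constructor
  · intro h
    have := congrArg e.symm h
    simp only [map_zero, LinearEquiv.symm_apply_apply] at this
    exact ⟨e.symm x, this, by simp⟩
  · rintro ⟨y, hy, rfl⟩
    have h0 : f y = 0 := hy
    simp [h0]

lemma range_conj (e : M ≃ₗ[F] M₂) (f : Module.End F M) :
    LinearMap.range (e.conj f) = Submodule.map (e : M →ₗ[F] M₂) (LinearMap.range f) := by
  ext x
  simp only [Submodule.mem_map, LinearMap.mem_range, LinearEquiv.conj_apply_apply]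
  constructor
  · rintro ⟨y, rfl⟩; exact ⟨f (e.symm y), ⟨_, rfl⟩, rfl⟩
  · rintro ⟨_, ⟨y, rfl⟩, rfl⟩; exact ⟨e y, by simp⟩

lemma ker_equiv_pow (c : M ≃ₗ[F] M) (m : ℕ) :
    LinearMap.ker ((c : Module.End F M) ^ m) = ⊥ := by
  rw [LinearMap.ker_eq_bot]
  induction m with
  | zero => simpa [pow_zero, Module.End.coe_one] using Function.injective_id
  | succ m ih =>
    rw [pow_succ]
    have hco : ⇑(((c : Module.End F M) ^ m) * (c : Module.End F M))
        = ⇑((c : Module.End F M) ^ m) ∘ ⇑c := rfl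
    rw [hco]
    exact ih.comp c.injective

lemma range_equiv_pow (c : M ≃ₗ[F] M) (m : ℕ) :
    LinearMap.range ((c : Module.End F M) ^ m) = ⊤ := by
  rw [LinearMap.range_eq_top]
  induction m with
  | zero => simpa [pow_zero, Module.End.coe_one] using Function.surjective_id
  | succ m ih =>
    rw [pow_succ]
    have hco : ⇑(((c : Module.End F M) ^ m) * (c : Module.End F M))
        = ⇑((c : Module.End F M) ^ m) ∘ ⇑c := rfl
    rw [hco]
    exact ih.comp c.surjective

lemma range_prodMap_zero (g : Module.End F M₂) (hg : LinearMap.range g = ⊤) :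
    LinearMap.range ((0 : Module.End F M).prodMap g)
      = Submodule.prod (⊥ : Submodule F M) (⊤ : Submodule F M₂) := by
  ext x
  simp only [LinearMap.mem_range, Submodule.mem_prod, Submodule.mem_bot, Submodule.mem_top,
    and_true]
  constructor
  · rintro ⟨y, rfl⟩; simp
  · intro h
    obtain ⟨y, hy⟩ := (LinearMap.range_eq_top.1 hg) x.2
    exact ⟨(0, y), by simp [LinearMap.prodMap_apply, hy, Prod.ext_iff, h.symm]⟩

/-- A submodule `⊤.prod ⊥` is isomorphic to the first factor. -/
noncomputable def topProdBot : (Submodule.prod (⊤ : Submodule F M) (⊥ : Submodule F M₂))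
    ≃ₗ[F] M where
  toFun x := (x : M × M₂).1
  map_add' x y := rfl
  map_smul' c x := rfl
  invFun u := ⟨(u, 0), by simp⟩
  left_inv x := by
    obtain ⟨⟨a, b⟩, hm⟩ := x
    have : b = 0 := hm.2
    subst this; rfl
  right_inv u := rfl

lemma finrank_prod_top_bot [FiniteDimensional F M] [FiniteDimensional F M₂] :
    finrank F (Submodule.prod (⊤ : Submodule F M) (⊥ : Submodule F M₂)) = finrank F M :=
  (topProdBot (F := F) (M := M) (M₂ := M₂)).finrank_eq

end Helpers

open LinearMap Module

section Fitting

variable {F : Type*} [Field F]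
variable {V : Type*} [AddCommGroup V] [Module F V] [FiniteDimensional F V]

/-- Stabilization: kernels of powers beyond the finrank agree. -/
lemma ker_pow_stab (f : Module.End F V) {m : ℕ} (hm : finrank F V ≤ m) :
    LinearMap.ker (f ^ m) = LinearMap.ker (f ^ finrank F V) :=
  Module.End.ker_pow_eq_ker_pow_finrank_of_le hm

lemma pow_eq_zero_of_pow_eq_zero (f : Module.End F V) {m m' : ℕ}
    (hm : finrank F V ≤ m) (hm' : finrank F V ≤ m') (h : f ^ m = 0) : f ^ m' = 0 := by
  rw [← LinearMap.ker_eq_top] at h ⊢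
  rw [ker_pow_stab f hm'] ; rw [ker_pow_stab f hm] at h; exact h

/-- Fitting decomposition at the exponent `d = finrank`. -/
lemma fitting_isCompl (f : Module.End F V) :
    IsCompl (LinearMap.ker (f ^ finrank F V)) (LinearMap.range (f ^ finrank F V)) := by
  set d := finrank F V with hd
  have hdisj : Disjoint (LinearMap.ker (f ^ d)) (LinearMap.range (f ^ d)) := by
    rw [Submodule.disjoint_def]
    rintro x hx ⟨y, rfl⟩
    have h2 : (f ^ (d + d)) y = 0 := by
      rw [pow_add, Module.End.mul_apply]
      exact hx
    have : y ∈ LinearMap.ker (f ^ d) := by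
      rw [hd, ← ker_pow_stab f (le_add_self : finrank F V ≤ d + d)] at *
      exact h2
    exact this
  have hdim : finrank F (LinearMap.ker (f ^ d)) + finrank F (LinearMap.range (f ^ d))
      = finrank F V := by
    rw [add_comm]; exact LinearMap.finrank_range_add_finrank_ker (f ^ d)
  refine ⟨hdisj, codisjoint_iff.2 ?_⟩
  exact Submodule.eq_top_of_disjoint _ _ hdim.ge hdisj

end Fitting

section Cards

variable {F : Type*} [Field F] [Fintype F]

local notation "q" => Fintype.card F

noncomputable instance (priority := 100) {α β : Type*} [Finite α] [Finite β]
    [AddCommGroup α] [Module F α] [AddCommGroup β] [Module F β] : Finite (α →ₗ[F] β) :=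
  Finite.of_injective (fun f => (f : α → β)) (DFunLike.coe_injective)

instance linEquivFinite {α β : Type*} [Finite α] [Finite β]
    [AddCommGroup α] [Module F α] [AddCommGroup β] [Module F β] : Finite (α ≃ₗ[F] β) :=
  Finite.of_injective (fun f => (f : α → β)) (DFunLike.coe_injective)

/-- The number of automorphisms of `F^m` is `|GL_m|`. -/
lemma card_aut (m : ℕ) :
    Nat.card ((Fin m → F) ≃ₗ[F] (Fin m → F)) = GG q m := by
  unfold GG
  have e1 : ((Fin m → F) ≃ₗ[F] (Fin m → F)) ≃ LinearMap.GeneralLinearGroup F (Fin m → F) :=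
    (LinearMap.GeneralLinearGroup.generalLinearEquiv F (Fin m → F)).symm.toEquiv
  have e2 : LinearMap.GeneralLinearGroup F (Fin m → F) ≃* GL (Fin m) F :=
    Units.mapEquiv (LinearMap.toMatrixAlgEquiv' : ((Fin m → F) →ₗ[F] (Fin m → F))
      ≃ₐ[F] Matrix (Fin m) (Fin m) F).toRingEquiv.toMulEquiv
  rw [Nat.card_congr e1, Nat.card_congr e2.toEquiv, Matrix.card_GL_field]
  rw [← Fin.prod_univ_eq_prod_range]

/-- Cardinality of the space of isomorphisms between two spaces of the same finite dim. -/
lemma card_iso {α : Type*} [AddCommGroup α] [Module F α] [Finite α] [Module.Finite F α]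
    (m : ℕ) (hdim : finrank F α = m) :
    Nat.card (α ≃ₗ[F] (Fin m → F)) = GG q m := by
  have hα : finrank F α = finrank F (Fin m → F) := by
    rw [hdim, Module.finrank_fintype_fun_eq_card, Fintype.card_fin]
  let j : α ≃ₗ[F] (Fin m → F) := LinearEquiv.ofFinrankEq _ _ hα
  have e : ((Fin m → F) ≃ₗ[F] (Fin m → F)) ≃ (α ≃ₗ[F] (Fin m → F)) :=
    { toFun := fun e => j ≪≫ₗ e
      invFun := fun e => j.symm ≪≫ₗ e
      left_inv := fun e => by ext x; simp
      right_inv := fun e => by ext x; simp }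
  rw [← Nat.card_congr e, card_aut]

lemma card_End (m : ℕ) :
    Nat.card (Module.End F (Fin m → F)) = q ^ (m * m) := by
  have e : Module.End F (Fin m → F) ≃ Matrix (Fin m) (Fin m) F :=
    (LinearMap.toMatrixAlgEquiv' : _ ≃ₐ[F] Matrix (Fin m) (Fin m) F).toEquiv
  rw [Nat.card_congr e]
  show Nat.card (Fin m → Fin m → F) = q ^ (m * m)
  rw [Nat.card_fun, Nat.card_fun, Nat.card_eq_fintype_card, Nat.card_eq_fintype_card,
    Fintype.card_fin, ← pow_mul]

end Cards
section MainStep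

open LinearMap Module

variable {F : Type*} [Field F] [Fintype F]
variable (d k : ℕ)

/-- The parametrization map: `(e, N, c) ↦ e ∘ (N × c) ∘ e⁻¹`. -/
def Phi (e : ((Fin k → F) × (Fin (d - k) → F)) ≃ₗ[F] (Fin d → F))
    (N : Module.End F (Fin k → F)) (c : (Fin (d - k) → F) ≃ₗ[F] (Fin (d - k) → F)) :
    Module.End F (Fin d → F) :=
  e.conj (N.prodMap (c : Module.End F (Fin (d - k) → F)))

lemma ker_Phi (e : ((Fin k → F) × (Fin (d - k) → F)) ≃ₗ[F] (Fin d → F))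
    (N : Module.End F (Fin k → F)) (c : (Fin (d - k) → F) ≃ₗ[F] (Fin (d - k) → F))
    (hN : N ^ d = 0) :
    LinearMap.ker ((Phi d k e N c) ^ d)
      = Submodule.map e.toLinearMap (Submodule.prod ⊤ ⊥) := by
  unfold Phi
  rw [← lconj_pow, prodMap_pow, hN, ker_conj]
  congr 1
  rw [ker_prodMap, ker_equiv_pow, LinearMap.ker_zero]

lemma range_Phi (e : ((Fin k → F) × (Fin (d - k) → F)) ≃ₗ[F] (Fin d → F))
    (N : Module.End F (Fin k → F)) (c : (Fin (d - k) → F) ≃ₗ[F] (Fin (d - k) → F))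
    (hN : N ^ d = 0) :
    LinearMap.range ((Phi d k e N c) ^ d)
      = Submodule.map e.toLinearMap (Submodule.prod ⊥ ⊤) := by
  unfold Phi
  rw [← lconj_pow, prodMap_pow, hN, range_conj]
  congr 1
  exact range_prodMap_zero _ (range_equiv_pow c d)

lemma finrank_ker_Phi (e : ((Fin k → F) × (Fin (d - k) → F)) ≃ₗ[F] (Fin d → F))
    (N : Module.End F (Fin k → F)) (c : (Fin (d - k) → F) ≃ₗ[F] (Fin (d - k) → F))
    (hN : N ^ d = 0) :
    finrank F (LinearMap.ker ((Phi d k e N c) ^ d)) = k := by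
  rw [ker_Phi d k e N c hN]
  have h1 := LinearEquiv.finrank_map_eq e
    ((⊤ : Submodule F (Fin k → F)).prod (⊥ : Submodule F (Fin (d - k) → F)))
  have h2 : finrank F ((⊤ : Submodule F (Fin k → F)).prod
      (⊥ : Submodule F (Fin (d - k) → F))) = k := by
    rw [finrank_prod_top_bot, Module.finrank_fintype_fun_eq_card, Fintype.card_fin]
  exact h1.trans h2

/-- Decompose a block-preserving automorphism of a product as a product of automorphisms. -/
lemma exists_prod_decomp {α β : Type*} [AddCommGroup α] [Module F α] [AddCommGroup β]
    [Module F β] (h : (α × β) ≃ₗ[F] (α × β))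
    (h1 : ∀ u : α, (h (u, 0)).2 = 0) (h2 : ∀ w : β, (h (0, w)).1 = 0) :
    ∃ (a : α ≃ₗ[F] α) (b : β ≃ₗ[F] β), ∀ z : α × β, h z = (a z.1, b z.2) := by
  set aL : α →ₗ[F] α := (LinearMap.fst F α β) ∘ₗ (h : α × β →ₗ[F] α × β) ∘ₗ
    (LinearMap.inl F α β) with haL
  set bL : β →ₗ[F] β := (LinearMap.snd F α β) ∘ₗ (h : α × β →ₗ[F] α × β) ∘ₗ
    (LinearMap.inr F α β) with hbL
  have hA : ∀ u : α, h (u, 0) = (aL u, 0) := fun u =>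
    Prod.ext (by simp [haL]) (h1 u)
  have hB : ∀ w : β, h (0, w) = (0, bL w) := fun w =>
    Prod.ext (h2 w) (by simp [hbL])
  have hsplit : ∀ z : α × β, h z = (aL z.1, bL z.2) := by
    intro z
    have : z = (z.1, 0) + (0, z.2) := by simp
    rw [this, map_add, hA, hB]
    simp
  have hBinj : Function.Injective bL := by
    intro w w' hww
    have : h (0, w) = h (0, w') := by rw [hB, hB, hww]
    have := h.injective this
    simpa using this
  have hAinj : Function.Injective aL := by
    intro u u' huu
    have : h (u, 0) = h (u', 0) := by rw [hA, hA, huu]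
    have := h.injective this
    simpa using this
  have hA' : ∀ u : α, (h.symm (u, 0)).2 = 0 := by
    intro u
    have h1' : h (h.symm (u, 0)) = (u, 0) := h.apply_symm_apply _
    rw [hsplit] at h1'
    have : bL (h.symm (u, 0)).2 = 0 := congrArg Prod.snd h1'
    exact hBinj (by simpa using this)
  have hB' : ∀ w : β, (h.symm (0, w)).1 = 0 := by
    intro w
    have h1' : h (h.symm (0, w)) = (0, w) := h.apply_symm_apply _
    rw [hsplit] at h1'
    have : aL (h.symm (0, w)).1 = 0 := congrArg Prod.fst h1'
    exact hAinj (by simpa using this)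
  set aL' : α →ₗ[F] α := (LinearMap.fst F α β) ∘ₗ (h.symm : α × β →ₗ[F] α × β) ∘ₗ
    (LinearMap.inl F α β) with haL'
  set bL' : β →ₗ[F] β := (LinearMap.snd F α β) ∘ₗ (h.symm : α × β →ₗ[F] α × β) ∘ₗ
    (LinearMap.inr F α β) with hbL'
  have hA2 : ∀ u : α, h.symm (u, 0) = (aL' u, 0) := fun u =>
    Prod.ext (by simp [haL']) (hA' u)
  have hB2 : ∀ w : β, h.symm (0, w) = (0, bL' w) := fun w =>
    Prod.ext (hB' w) (by simp [hbL'])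
  refine ⟨LinearEquiv.ofLinear aL aL' ?_ ?_, LinearEquiv.ofLinear bL bL' ?_ ?_, ?_⟩
  · ext u
    have : h (h.symm (u, 0)) = (u, 0) := h.apply_symm_apply _
    rw [hA2, hA] at this
    simpa using congrArg Prod.fst this
  · ext u
    have : h.symm (h (u, 0)) = (u, 0) := h.symm_apply_apply _
    rw [hA, hA2] at this
    simpa using congrArg Prod.fst this
  · ext w
    have : h (h.symm (0, w)) = (0, w) := h.apply_symm_apply _
    rw [hB2, hB] at this
    simpa using congrArg Prod.snd this
  · ext w
    have : h.symm (h (0, w)) = (0, w) := h.symm_apply_apply _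
    rw [hB, hB2] at this
    simpa using congrArg Prod.snd this
  · intro z
    rw [hsplit]
    rfl

end MainStep
section Surj

open LinearMap Module

variable {F : Type*} [Field F] [Fintype F]
variable (d k : ℕ)

lemma Phi_surj (f : Module.End F (Fin d → F))
    (hf : finrank F (LinearMap.ker (f ^ d)) = k) :
    ∃ (e : ((Fin k → F) × (Fin (d - k) → F)) ≃ₗ[F] (Fin d → F))
      (N : Module.End F (Fin k → F)) (c : (Fin (d - k) → F) ≃ₗ[F] (Fin (d - k) → F)),
      N ^ d = 0 ∧ Phi d k e N c = f := by
  have hVd : finrank F (Fin d → F) = d := by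
    rw [Module.finrank_fintype_fun_eq_card, Fintype.card_fin]
  have hcompl : IsCompl (LinearMap.ker (f ^ d)) (LinearMap.range (f ^ d)) := by
    have := fitting_isCompl f
    rwa [hVd] at this
  have hdimU : finrank F (LinearMap.ker (f ^ d)) = k := hf
  have hdimW : finrank F (LinearMap.range (f ^ d)) = d - k := by
    have h := LinearMap.finrank_range_add_finrank_ker (f ^ d)
    rw [hVd, hf] at h
    omega
  have hcomm : ∀ x, (f ^ d) (f x) = f ((f ^ d) x) := by
    intro x
    rw [← Module.End.mul_apply, ← Module.End.mul_apply, ← pow_succ, ← pow_succ']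
  have hUinv : ∀ x ∈ LinearMap.ker (f ^ d), f x ∈ LinearMap.ker (f ^ d) := by
    intro x hx
    have hx' : (f ^ d) x = 0 := hx
    show (f ^ d) (f x) = 0
    rw [hcomm, hx', map_zero]
  have hWinv : ∀ x ∈ LinearMap.range (f ^ d), f x ∈ LinearMap.range (f ^ d) := by
    rintro x ⟨y, rfl⟩
    exact ⟨f y, hcomm y⟩
  set fU := f.restrict hUinv with hfU
  set fW := f.restrict hWinv with hfW
  have hfUnil : fU ^ d = 0 := by
    have hp := Module.End.pow_restrict d hUinv
    rw [← hfU] at hp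
    rw [hp]
    refine LinearMap.ext fun x => ?_
    apply Subtype.ext
    simp only [LinearMap.restrict_coe_apply, LinearMap.zero_apply, ZeroMemClass.coe_zero]
    exact LinearMap.mem_ker.1 x.2
  have hfWinj : Function.Injective fW := by
    rw [← LinearMap.ker_eq_bot, LinearMap.ker_eq_bot']
    intro x hx
    have hx0 : f (x : Fin d → F) = 0 := congrArg Subtype.val hx
    have hmem : (x : Fin d → F) ∈ LinearMap.ker (f ^ (d + 1)) := by
      show (f ^ (d + 1)) (x : Fin d → F) = 0
      rw [pow_succ, Module.End.mul_apply, hx0, map_zero]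
    have hker : LinearMap.ker (f ^ (d + 1)) = LinearMap.ker (f ^ d) := by
      have h1 : LinearMap.ker (f ^ (d + 1)) = LinearMap.ker (f ^ finrank F (Fin d → F)) :=
        Module.End.ker_pow_eq_ker_pow_finrank_of_le (by omega)
      have h2 : LinearMap.ker (f ^ d) = LinearMap.ker (f ^ finrank F (Fin d → F)) :=
        Module.End.ker_pow_eq_ker_pow_finrank_of_le (by omega)
      rw [h1, h2]
    rw [hker] at hmem
    have hx1 : (x : Fin d → F) ∈ LinearMap.ker (f ^ d) ⊓ LinearMap.range (f ^ d) :=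
      Submodule.mem_inf.2 ⟨hmem, x.2⟩
    rw [hcompl.disjoint.eq_bot] at hx1
    exact Subtype.ext ((Submodule.mem_bot F).1 hx1)
  have hfWsurj : Function.Surjective fW :=
    (LinearMap.injective_iff_surjective).1 hfWinj
  set cW : LinearMap.range (f ^ d) ≃ₗ[F] LinearMap.range (f ^ d) :=
    LinearEquiv.ofBijective fW ⟨hfWinj, hfWsurj⟩ with hcW
  set eU : LinearMap.ker (f ^ d) ≃ₗ[F] (Fin k → F) := LinearEquiv.ofFinrankEq _ _ (by
    rw [hdimU, Module.finrank_fintype_fun_eq_card, Fintype.card_fin]) with heU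
  set eW : LinearMap.range (f ^ d) ≃ₗ[F] (Fin (d - k) → F) := LinearEquiv.ofFinrankEq _ _ (by
    rw [hdimW, Module.finrank_fintype_fun_eq_card, Fintype.card_fin]) with heW
  set e : ((Fin k → F) × (Fin (d - k) → F)) ≃ₗ[F] (Fin d → F) :=
    (eU.symm.prodCongr eW.symm) ≪≫ₗ
      Submodule.prodEquivOfIsCompl (LinearMap.ker (f ^ d)) (LinearMap.range (f ^ d)) hcompl
    with he
  have hez : ∀ w : (Fin k → F) × (Fin (d - k) → F),
      e w = ((eU.symm w.1 : LinearMap.ker (f ^ d)) : Fin d → F)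
        + ((eW.symm w.2 : LinearMap.range (f ^ d)) : Fin d → F) := by
    intro w
    rw [he]
    simp [LinearEquiv.trans_apply, Submodule.coe_prodEquivOfIsCompl']
  refine ⟨e, eU.conj fU, eW.symm ≪≫ₗ cW ≪≫ₗ eW, ?_, ?_⟩
  · rw [← lconj_pow, hfUnil]
    apply LinearMap.ext
    intro x
    rw [LinearEquiv.conj_apply_apply, LinearMap.zero_apply, LinearMap.zero_apply]
    exact map_zero eU.toLinearMap
  · apply LinearMap.ext
    intro x
    have hx : x = e (e.symm x) := (e.apply_symm_apply x).symm
    rw [hx]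
    generalize e.symm x = z
    show (Phi d k e _ _) (e z) = f (e z)
    unfold Phi
    rw [LinearEquiv.conj_apply_apply, e.symm_apply_apply]
    rw [hez, hez, map_add]
    have h1 : f ((eU.symm z.1 : LinearMap.ker (f ^ d)) : Fin d → F)
        = ((fU (eU.symm z.1) : LinearMap.ker (f ^ d)) : Fin d → F) := rfl
    have h2 : f ((eW.symm z.2 : LinearMap.range (f ^ d)) : Fin d → F)
        = ((fW (eW.symm z.2) : LinearMap.range (f ^ d)) : Fin d → F) := rfl
    rw [h1, h2]
    have hfst : ((LinearMap.prodMap (eU.conj fU)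
        ((eW.symm ≪≫ₗ cW ≪≫ₗ eW : (Fin (d - k) → F) ≃ₗ[F] (Fin (d - k) → F)) :
          Module.End F (Fin (d - k) → F))) z)
        = ((eU.conj fU) z.1, eW (cW (eW.symm z.2))) := by
      simp [LinearMap.prodMap_apply, LinearEquiv.trans_apply]
    rw [hfst]
    congr 1
    · congr 1
      show eU.symm ((eU.conj fU) z.1) = fU (eU.symm z.1)
      rw [LinearEquiv.conj_apply_apply, eU.symm_apply_apply]
    · congr 1
      show eW.symm (eW (cW (eW.symm z.2))) = fW (eW.symm z.2)
      rw [eW.symm_apply_apply]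
      rfl

end Surj
section CardStep

open LinearMap Module

variable {F : Type*} [Field F] [Fintype F]

lemma card_step (d k : ℕ) (hk : k ≤ d) :
    Nat.card {f : Module.End F (Fin d → F) // finrank F (LinearMap.ker (f ^ d)) = k}
      * GG (Fintype.card F) k
    = GG (Fintype.card F) d
      * Nat.card {N : Module.End F (Fin k → F) // N ^ k = 0} := by
  have hq2 : 2 ≤ Fintype.card F := Fintype.one_lt_card
  let P := (((Fin k → F) × (Fin (d - k) → F)) ≃ₗ[F] (Fin d → F))
    × {N : Module.End F (Fin k → F) // N ^ d = 0}
    × ((Fin (d - k) → F) ≃ₗ[F] (Fin (d - k) → F))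
  let T := {f : Module.End F (Fin d → F) // finrank F (LinearMap.ker (f ^ d)) = k}
  let g : P → T := fun p => ⟨Phi d k p.1 p.2.1.1 p.2.2, finrank_ker_Phi d k _ _ _ p.2.1.2⟩
  have hfib : ∀ t : T, Nat.card {p : P // g p = t}
      = GG (Fintype.card F) k * GG (Fintype.card F) (d - k) := by
    rintro ⟨f, hf⟩
    obtain ⟨e₀, N₀, c₀, hN₀, hPhi₀⟩ := Phi_surj d k f hf
    let Ψ : (((Fin k → F) ≃ₗ[F] (Fin k → F)) × ((Fin (d - k) → F) ≃ₗ[F] (Fin (d - k) → F)))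
        → {p : P // g p = ⟨f, hf⟩} := fun ab =>
      ⟨⟨(ab.1.prodCongr ab.2) ≪≫ₗ e₀,
        ⟨ab.1.symm.conj N₀, by
          rw [← lconj_pow, hN₀]
          refine LinearMap.ext fun x => ?_
          rw [LinearEquiv.conj_apply_apply, LinearMap.zero_apply, LinearMap.zero_apply]
          exact map_zero ab.1.symm.toLinearMap⟩,
        ab.2 ≪≫ₗ c₀ ≪≫ₗ ab.2.symm⟩, by
      apply Subtype.ext
      show Phi d k ((ab.1.prodCongr ab.2) ≪≫ₗ e₀) (ab.1.symm.conj N₀)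
        (ab.2 ≪≫ₗ c₀ ≪≫ₗ ab.2.symm) = f
      rw [← hPhi₀]
      refine LinearMap.ext fun x => ?_
      simp [Phi, LinearEquiv.conj_apply_apply, LinearEquiv.trans_apply,
        LinearEquiv.prodCongr_symm, LinearEquiv.prodCongr_apply, LinearMap.prodMap_apply,
        LinearEquiv.symm_trans_apply]⟩
    have hinj : Function.Injective Ψ := by
      rintro ⟨a, b⟩ ⟨a', b'⟩ hab
      have h1 : (a.prodCongr b) ≪≫ₗ e₀ = (a'.prodCongr b') ≪≫ₗ e₀ :=
        congrArg (fun s => s.val.1) hab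
      have h2 : ∀ z : (Fin k → F) × (Fin (d - k) → F),
          (a z.1, b z.2) = (a' z.1, b' z.2) := by
        intro z
        have h3 := congrArg
          (fun (s : ((Fin k → F) × (Fin (d - k) → F)) ≃ₗ[F] (Fin d → F)) => s z) h1
        simp only [LinearEquiv.trans_apply] at h3
        have h4 := e₀.injective h3
        simpa [LinearEquiv.prodCongr_apply] using h4
      have ha : a = a' := LinearEquiv.ext fun u => congrArg Prod.fst (h2 (u, 0))
      have hb : b = b' := LinearEquiv.ext fun w => congrArg Prod.snd (h2 (0, w))
      rw [Prod.ext_iff]; exact ⟨ha, hb⟩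
    have hsurj : Function.Surjective Ψ := by
      rintro ⟨⟨e, ⟨N, hN⟩, c⟩, hp⟩
      have hPhi : Phi d k e N c = f := congrArg Subtype.val hp
      set h : ((Fin k → F) × (Fin (d - k) → F)) ≃ₗ[F]
          ((Fin k → F) × (Fin (d - k) → F)) := e ≪≫ₗ e₀.symm with hh
      have hkermap : Submodule.map e.toLinearMap (Submodule.prod ⊤ ⊥)
          = Submodule.map e₀.toLinearMap (Submodule.prod ⊤ ⊥) := by
        rw [← ker_Phi d k e N c hN, ← ker_Phi d k e₀ N₀ c₀ hN₀, hPhi, hPhi₀]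
      have hrangemap : Submodule.map e.toLinearMap (Submodule.prod ⊥ ⊤)
          = Submodule.map e₀.toLinearMap (Submodule.prod ⊥ ⊤) := by
        rw [← range_Phi d k e N c hN, ← range_Phi d k e₀ N₀ c₀ hN₀, hPhi, hPhi₀]
      have h1 : ∀ u : Fin k → F, (h (u, 0)).2 = 0 := by
        intro u
        have hmem : e (u, 0) ∈ Submodule.map e.toLinearMap (Submodule.prod ⊤ ⊥) :=
          Submodule.mem_map_of_mem (by simp [Submodule.mem_prod])
        rw [hkermap] at hmem
        obtain ⟨z', hz', hez'⟩ := hmem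
        have hz : h (u, 0) = z' := by
          rw [hh]
          simp only [LinearEquiv.trans_apply]
          rw [← hez']
          exact e₀.symm_apply_apply z'
        rw [hz]
        exact hz'.2
      have h2 : ∀ w : Fin (d - k) → F, (h (0, w)).1 = 0 := by
        intro w
        have hmem : e (0, w) ∈ Submodule.map e.toLinearMap (Submodule.prod ⊥ ⊤) :=
          Submodule.mem_map_of_mem (by simp [Submodule.mem_prod])
        rw [hrangemap] at hmem
        obtain ⟨z', hz', hez'⟩ := hmem
        have hz : h (0, w) = z' := by
          rw [hh]
          simp only [LinearEquiv.trans_apply]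
          rw [← hez']
          exact e₀.symm_apply_apply z'
        rw [hz]
        exact hz'.1
      obtain ⟨a, b, hab⟩ := exists_prod_decomp h h1 h2
      have heh : ∀ z : (Fin k → F) × (Fin (d - k) → F), e z = e₀ (a z.1, b z.2) := by
        intro z
        rw [← hab z, hh]
        simp only [LinearEquiv.trans_apply]
        rw [e₀.apply_symm_apply]
      have hkey : ∀ z : (Fin k → F) × (Fin (d - k) → F),
          e ((N.prodMap (c : Module.End F (Fin (d - k) → F))) z)
          = e₀ ((N₀.prodMap (c₀ : Module.End F (Fin (d - k) → F))) (a z.1, b z.2)) := by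
        intro z
        have happ := congrArg (fun (s : Module.End F (Fin d → F)) => s (e z))
          (hPhi.trans hPhi₀.symm)
        simp only [Phi, LinearEquiv.conj_apply_apply, LinearEquiv.symm_apply_apply] at happ
        rw [happ]
        have hz : e₀.symm (e z) = (a z.1, b z.2) := by
          rw [← hab z, hh]
          simp only [LinearEquiv.trans_apply]
        rw [hz]
      have haN : ∀ u, a (N u) = N₀ (a u) := by
        intro u
        have h' := hkey (u, 0)
        rw [heh ((N.prodMap (c : Module.End F (Fin (d - k) → F))) (u, 0))] at h'
        have h'' := e₀.injective h'
        simpa [LinearMap.prodMap_apply] using congrArg Prod.fst h''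
      have hbc : ∀ w, b ((c : Module.End F (Fin (d - k) → F)) w) = c₀ (b w) := by
        intro w
        have h' := hkey (0, w)
        rw [heh ((N.prodMap (c : Module.End F (Fin (d - k) → F))) (0, w))] at h'
        have h'' := e₀.injective h'
        simpa [LinearMap.prodMap_apply] using congrArg Prod.snd h''
      refine ⟨(a, b), ?_⟩
      apply Subtype.ext
      have hcomp1 : (a.prodCongr b) ≪≫ₗ e₀ = e := by
        refine LinearEquiv.ext fun z => ?_
        simp only [LinearEquiv.trans_apply, LinearEquiv.prodCongr_apply]
        exact (heh z).symm
      have hcomp2 : a.symm.conj N₀ = N := by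
        refine LinearMap.ext fun u => ?_
        rw [LinearEquiv.conj_apply_apply, LinearEquiv.symm_symm, ← haN u,
          a.symm_apply_apply]
      have hcomp3 : b ≪≫ₗ c₀ ≪≫ₗ b.symm = c := by
        refine LinearEquiv.ext fun w => ?_
        simp only [LinearEquiv.trans_apply]
        have := hbc w
        simp only [LinearEquiv.coe_coe] at this
        rw [← this, b.symm_apply_apply]
      exact Prod.ext hcomp1 (Prod.ext (Subtype.ext hcomp2) hcomp3)
    have hcard := Nat.card_congr (Equiv.ofBijective Ψ ⟨hinj, hsurj⟩)
    rw [← hcard, Nat.card_prod, card_aut, card_aut]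
  have hcount : Nat.card P
      = (GG (Fintype.card F) k * GG (Fintype.card F) (d - k)) * Nat.card T :=
    card_eq_fiber_mul g _ hfib
  have hdimprod : finrank F ((Fin k → F) × (Fin (d - k) → F)) = d := by
    rw [Module.finrank_prod, Module.finrank_fintype_fun_eq_card,
      Module.finrank_fintype_fun_eq_card, Fintype.card_fin, Fintype.card_fin]
    omega
  have hPcard : Nat.card P
      = GG (Fintype.card F) d
        * (Nat.card {N : Module.End F (Fin k → F) // N ^ d = 0}
          * GG (Fintype.card F) (d - k)) := by
    rw [Nat.card_prod, Nat.card_prod, card_aut, card_iso d hdimprod]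
  have hrk : finrank F (Fin k → F) = k := by
    rw [Module.finrank_fintype_fun_eq_card, Fintype.card_fin]
  have hNil : Nat.card {N : Module.End F (Fin k → F) // N ^ d = 0}
      = Nat.card {N : Module.End F (Fin k → F) // N ^ k = 0} := by
    refine Nat.card_congr (Equiv.subtypeEquivRight fun N => ?_)
    constructor
    · exact fun hh => pow_eq_zero_of_pow_eq_zero N (by rw [hrk]; omega) (by rw [hrk]) hh
    · exact fun hh => pow_eq_zero_of_pow_eq_zero N (by rw [hrk]) (by rw [hrk]; omega) hh
  have key : (Nat.card T * GG (Fintype.card F) k) * GG (Fintype.card F) (d - k)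
      = (GG (Fintype.card F) d * Nat.card {N : Module.End F (Fin k → F) // N ^ k = 0})
        * GG (Fintype.card F) (d - k) := by
    calc (Nat.card T * GG (Fintype.card F) k) * GG (Fintype.card F) (d - k)
        = (GG (Fintype.card F) k * GG (Fintype.card F) (d - k)) * Nat.card T := by ring
      _ = Nat.card P := hcount.symm
      _ = GG (Fintype.card F) d
          * (Nat.card {N : Module.End F (Fin k → F) // N ^ d = 0}
            * GG (Fintype.card F) (d - k)) := hPcard
      _ = (GG (Fintype.card F) d
          * Nat.card {N : Module.End F (Fin k → F) // N ^ k = 0})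
          * GG (Fintype.card F) (d - k) := by rw [hNil]; ring
  exact Nat.eq_of_mul_eq_mul_right (GG_pos hq2 (d - k)) key

end CardStep
section Final

open LinearMap Module

variable {F : Type*} [Field F] [Fintype F]

theorem nilCount (d : ℕ) :
    Nat.card {f : Module.End F (Fin d → F) // f ^ d = 0}
      = Fintype.card F ^ (d * d - d) := by
  induction d using Nat.strong_induction_on with
  | _ d ih =>
  have hq1 : 1 ≤ Fintype.card F := Fintype.card_pos
  have hq2 : 2 ≤ Fintype.card F := Fintype.one_lt_card
  have hVd : finrank F (Fin d → F) = d := by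
    rw [Module.finrank_fintype_fun_eq_card, Fintype.card_fin]
  let gdim : Module.End F (Fin d → F) → Fin (d + 1) := fun f =>
    ⟨finrank F (LinearMap.ker (f ^ d)), by
      have h := Submodule.finrank_le (LinearMap.ker (f ^ d))
      rw [hVd] at h
      omega⟩
  let Sk : ℕ → ℕ := fun kk =>
    Nat.card {f : Module.End F (Fin d → F) // finrank F (LinearMap.ker (f ^ d)) = kk}
  have htot := card_eq_sum_fibers gdim
  have hfi : ∀ i : Fin (d + 1),
      Nat.card {f : Module.End F (Fin d → F) // gdim f = i} = Sk (i : ℕ) := by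
    intro i
    refine Nat.card_congr (Equiv.subtypeEquivRight fun f => ?_)
    constructor
    · intro hgf
      exact congrArg Fin.val hgf
    · intro hval
      exact Fin.ext hval
  rw [card_End, Finset.sum_congr rfl (fun i _ => hfi i)] at htot
  rw [Fin.sum_univ_eq_sum_range (fun i => Sk i) (d + 1)] at htot
  -- values for kk < d
  have hSkval : ∀ kk, kk < d →
      Sk kk = Gr (Fintype.card F) kk d * Fintype.card F ^ (kk * kk - kk) := by
    intro kk hlt
    have h1 := card_step (F := F) d kk (le_of_lt hlt)
    rw [ih kk hlt] at h1
    have h2 : GG (Fintype.card F) d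
        = GG (Fintype.card F) kk * Gr (Fintype.card F) kk d := by
      rw [GG_eq_Gr hq1, GG_eq_Gr hq1, ← Gr_split _ (Nat.zero_le kk) (le_of_lt hlt)]
    rw [h2] at h1
    refine Nat.eq_of_mul_eq_mul_left (GG_pos hq2 kk) ?_
    calc GG (Fintype.card F) kk * Sk kk = Sk kk * GG (Fintype.card F) kk := by ring
      _ = GG (Fintype.card F) kk * Gr (Fintype.card F) kk d
          * Fintype.card F ^ (kk * kk - kk) := h1
      _ = GG (Fintype.card F) kk
          * (Gr (Fintype.card F) kk d * Fintype.card F ^ (kk * kk - kk)) := by ring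
  have hSd : Sk d = Nat.card {f : Module.End F (Fin d → F) // f ^ d = 0} := by
    refine Nat.card_congr (Equiv.subtypeEquivRight fun f => ?_)
    constructor
    · intro hfin
      rw [← LinearMap.ker_eq_top]
      exact Submodule.eq_top_of_finrank_eq (by rw [hfin, hVd])
    · intro hf0
      rw [← LinearMap.ker_eq_top] at hf0
      rw [hf0, finrank_top, hVd]
  have hid := key_identity hq1 d
  rw [Finset.sum_range_succ, Gr_self, one_mul] at hid
  rw [Finset.sum_range_succ] at htot
  have hpart : ∑ kk ∈ Finset.range d, Sk kk
      = ∑ kk ∈ Finset.range d, Gr (Fintype.card F) kk d * Fintype.card F ^ (kk * kk - kk) :=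
    Finset.sum_congr rfl fun kk hkk => hSkval kk (Finset.mem_range.1 hkk)
  rw [hpart, hSd] at htot
  omega

end Final

theorem steinberg_card_unipotent (p n : ℕ) [Fact p.Prime] :
    Nat.card {g : GL (Fin n) (ZMod p) //
        ((g : Matrix (Fin n) (Fin n) (ZMod p)) - 1) ^ n = 0}
      = p ^ (n * (n - 1)) := by
  -- step 1: bijection with nilpotent matrices
  have e1 : {g : GL (Fin n) (ZMod p) //
        ((g : Matrix (Fin n) (Fin n) (ZMod p)) - 1) ^ n = 0}
      ≃ {N : Matrix (Fin n) (Fin n) (ZMod p) // N ^ n = 0} :=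
    { toFun := fun g => ⟨(g.1 : Matrix (Fin n) (Fin n) (ZMod p)) - 1, g.2⟩
      invFun := fun N =>
        ⟨(IsNilpotent.isUnit_one_add (⟨n, N.2⟩ : IsNilpotent N.1)).unit, by
          simp [N.2]⟩
      left_inv := fun g => by
        apply Subtype.ext
        apply Units.ext
        simp
      right_inv := fun N => by
        apply Subtype.ext
        simp }
  -- step 2: matrices to endomorphisms
  have e2 : {N : Matrix (Fin n) (Fin n) (ZMod p) // N ^ n = 0}
      ≃ {f : Module.End (ZMod p) (Fin n → ZMod p) // f ^ n = 0} :=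
    { toFun := fun N => ⟨(LinearMap.toMatrixAlgEquiv').symm N.1, by
        rw [← map_pow, N.2, map_zero]⟩
      invFun := fun f => ⟨LinearMap.toMatrixAlgEquiv' f.1, by
        rw [← map_pow, f.2, map_zero]⟩
      left_inv := fun N => by
        apply Subtype.ext
        simp
      right_inv := fun f => by
        apply Subtype.ext
        simp }
  rw [Nat.card_congr (e1.trans e2), nilCount, ZMod.card]
  congr 1
  cases n with
  | zero => simp
  | succ m => simp [Nat.succ_sub_one]; ring_nf; omega
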